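/- Assume the non-degeneracy condition with recoverable hidden states H* = {j*} × S*, and regularity. For x ∈ X^T define Î(x) = {i ∈ [T] : supp(P(J_i | X_{−i} = x_{−i})) = {j*} and supp(P(S_i | X_{−i} = x_{−i})) ⊆ S*}. Then there exist a query q ∈ ℝ^{|H|} and a key matrix Θ^{(K)} ∈ ℝ^{|H|×|X|} such that whenever P(X_{1:T} = x) > 0 and Î(x) is nonempty, the set of attended-to positions argmax_{i ∈ [T]} { q^T Θ^{(K)} G_i(x) } equals Î(x), where G_i(x) = P(X_i | X_{−i} = x_{−i}) and argmax denotes the set of positions achieving the maximum. -/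

import Mathlib

open scoped Classical
open Matrix

noncomputable section

/-- Forward pass for a Markov chain with transition matrix `A`. -/
def fwdVec {H : Type*} [Fintype H] (A : Matrix H H ℝ) :
    (H → ℝ) → List (H → ℝ) → (H → ℝ)
  | μ, [] => μ
  | μ, v :: vs => fwdVec A (A.mulVec fun h => μ h * v h) vs

/-- `mJointAt A μ W m x i g = P(H_i = g, X_{−i} = x_{−i} | M = m)` in a
memory-augmented HMM (hidden chain `H_1, …, H_T`, `P(H_1) = A μ`). -/
def mJointAt {𝕄 S X : Type*} {N T : ℕ} [Fintype S] [DecidableEq S]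
    (A : Matrix (Fin N × S) (Fin N × S) ℝ) (μ : Fin N × S → ℝ)
    (W : X → 𝕄 → Fin N × S → ℝ) (m : Fin N → 𝕄)
    (x : Fin T → X) (i : Fin T) (g : Fin N × S) : ℝ :=
  ∑ h, fwdVec A (A.mulVec μ)
    (List.ofFn fun k : Fin T =>
      if k = i then (fun g' => if g' = g then 1 else 0)
      else fun g' => W (x k) (m g'.1) g') h

/-- `mZ … x i = P(X_{−i} = x_{−i})`. -/
def mZ {𝕄 S X : Type*} {N T : ℕ} [Fintype 𝕄] [Fintype S] [DecidableEq S]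
    (pM : (Fin N → 𝕄) → ℝ) (A : Matrix (Fin N × S) (Fin N × S) ℝ)
    (μ : Fin N × S → ℝ) (W : X → 𝕄 → Fin N × S → ℝ)
    (x : Fin T → X) (i : Fin T) : ℝ :=
  ∑ m, pM m * ∑ g, mJointAt A μ W m x i g

/-- `mSeqPm … m x = P(X_{1:T} = x | M = m)`. -/
def mSeqPm {𝕄 S X : Type*} {N T : ℕ} [Fintype S]
    (A : Matrix (Fin N × S) (Fin N × S) ℝ) (μ : Fin N × S → ℝ)
    (W : X → 𝕄 → Fin N × S → ℝ) (m : Fin N → 𝕄) (x : Fin T → X) : ℝ :=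
  ∑ h, fwdVec A (A.mulVec μ)
    (List.ofFn fun k : Fin T => fun g' => W (x k) (m g'.1) g') h

/-- `mSeqP … x = P(X_{1:T} = x)`. -/
def mSeqP {𝕄 S X : Type*} {N T : ℕ} [Fintype 𝕄] [Fintype S]
    (pM : (Fin N → 𝕄) → ℝ) (A : Matrix (Fin N × S) (Fin N × S) ℝ)
    (μ : Fin N × S → ℝ) (W : X → 𝕄 → Fin N × S → ℝ) (x : Fin T → X) : ℝ :=
  ∑ m, pM m * mSeqPm A μ W m x

/-- `mGtok … x i z = P(X_i = z | X_{−i} = x_{−i})`, the pretrained model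
output `G_i(x)` at position `i`. -/
def mGtok {𝕄 S X : Type*} {N T : ℕ} [Fintype 𝕄] [Fintype S] [DecidableEq S]
    (pM : (Fin N → 𝕄) → ℝ) (A : Matrix (Fin N × S) (Fin N × S) ℝ)
    (μ : Fin N × S → ℝ) (W : X → 𝕄 → Fin N × S → ℝ)
    (x : Fin T → X) (i : Fin T) (z : X) : ℝ :=
  (∑ m, pM m * ∑ g, mJointAt A μ W m x i g * W z (m g.1) g) / mZ pM A μ W x i

/-- `mPostH … x i g = P(H_i = g | X_{−i} = x_{−i})`. -/
def mPostH {𝕄 S X : Type*} {N T : ℕ} [Fintype 𝕄] [Fintype S] [DecidableEq S]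
    (pM : (Fin N → 𝕄) → ℝ) (A : Matrix (Fin N × S) (Fin N × S) ℝ)
    (μ : Fin N × S → ℝ) (W : X → 𝕄 → Fin N × S → ℝ)
    (x : Fin T → X) (i : Fin T) (g : Fin N × S) : ℝ :=
  (∑ m, pM m * mJointAt A μ W m x i g) / mZ pM A μ W x i

section fwdaux
variable {H : Type*} [Fintype H] (A : Matrix H H ℝ)

lemma fwdVec_append (l1 l2 : List (H → ℝ)) (μ : H → ℝ) :
    fwdVec A μ (l1 ++ l2) = fwdVec A (fwdVec A μ l1) l2 := by
  induction l1 generalizing μ with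
  | nil => rfl
  | cons v vs ih =>
    simp only [List.cons_append, fwdVec]
    exact ih _

lemma fwdVec_add (l : List (H → ℝ)) (μ ν : H → ℝ) :
    fwdVec A (μ + ν) l = fwdVec A μ l + fwdVec A ν l := by
  induction l generalizing μ ν with
  | nil => rfl
  | cons v vs ih =>
    simp only [fwdVec, Pi.add_apply, add_mul, ← ih]
    congr 1
    rw [← Matrix.mulVec_add]
    congr 1

lemma fwdVec_zero (l : List (H → ℝ)) : fwdVec A 0 l = 0 := by
  induction l with
  | nil => rfl
  | cons v vs ih =>
    simp only [fwdVec]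
    have h0 : (fun h => (0 : H → ℝ) h * v h) = 0 := by funext h; simp
    rw [h0, Matrix.mulVec_zero, ih]

lemma fwdVec_sum {ι : Type*} (s : Finset ι) (f : ι → (H → ℝ)) (l : List (H → ℝ)) :
    fwdVec A (∑ g ∈ s, f g) l = ∑ g ∈ s, fwdVec A (f g) l := by
  induction s using Finset.induction with
  | empty => simp [fwdVec_zero]
  | insert _ _ hni ih => simp [Finset.sum_insert hni, fwdVec_add, ih]

lemma fwdVec_nonneg (hA0 : ∀ g g', 0 ≤ A g' g) (l : List (H → ℝ)) (μ : H → ℝ)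
    (hμ : ∀ h, 0 ≤ μ h) (hl : ∀ v ∈ l, ∀ h, 0 ≤ v h) : ∀ h, 0 ≤ fwdVec A μ l h := by
  induction l generalizing μ with
  | nil => exact hμ
  | cons v vs ih =>
    intro h
    simp only [fwdVec]
    refine ih _ (fun h' => ?_) (fun w hw => hl w (List.mem_cons_of_mem _ hw)) h
    exact Finset.sum_nonneg fun g _ => mul_nonneg (hA0 g h') (mul_nonneg (hμ g) (hl v List.mem_cons_self g))

lemma fwdVec_mono (hA0 : ∀ g g', 0 ≤ A g' g) {l l' : List (H → ℝ)}
    (hll : List.Forall₂ (fun v v' => ∀ h, 0 ≤ v h ∧ v h ≤ v' h) l l')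
    {μ μ' : H → ℝ} (hμ : ∀ h, 0 ≤ μ h) (hμμ : ∀ h, μ h ≤ μ' h) :
    ∀ h, fwdVec A μ l h ≤ fwdVec A μ' l' h := by
  induction hll generalizing μ μ' with
  | nil => exact hμμ
  | @cons v v' vs vs' hv hvs ih =>
    simp only [fwdVec]
    refine ih (fun h => ?_) (fun h => ?_)
    · exact Finset.sum_nonneg fun g _ => mul_nonneg (hA0 g h) (mul_nonneg (hμ g) (hv g).1)
    · refine Finset.sum_le_sum fun g _ => ?_
      exact mul_le_mul_of_nonneg_left
        (mul_le_mul (hμμ g) (hv g).2 (hv g).1 (le_trans (hμ g) (hμμ g))) (hA0 g h)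

lemma sum_mulVec {ι : Type*} (s : Finset ι) (w : ι → H → ℝ) :
    ∑ g ∈ s, A.mulVec (w g) = A.mulVec (∑ g ∈ s, w g) := by
  simp only [← Matrix.mulVecLin_apply, ← map_sum]

end fwdaux

lemma ofFn_ite_eq_set {α : Type*} {T : ℕ} (f : Fin T → α) (i : Fin T) (v : α) :
    (List.ofFn fun k => if k = i then v else f k) = (List.ofFn f).set ↑i v := by
  apply List.ext_getElem
  · simp
  · intro n h1 h2
    simp only [List.getElem_ofFn, List.getElem_set]
    split_ifs with h h' h'
    · rfl
    · exact absurd (Fin.ext_iff.mp h.symm) h'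
    · exact absurd (Fin.ext h'.symm) h
    · rfl

lemma sum_mJointAt {𝕄 S X : Type*} {N T : ℕ} [Fintype S] [DecidableEq S]
    (A : Matrix (Fin N × S) (Fin N × S) ℝ) (μ : Fin N × S → ℝ)
    (W : X → 𝕄 → Fin N × S → ℝ) (m : Fin N → 𝕄) (x : Fin T → X) (i : Fin T) :
    ∑ g, mJointAt A μ W m x i g
      = ∑ h, fwdVec A (A.mulVec μ)
          (((List.ofFn fun k : Fin T => fun g' => W (x k) (m g'.1) g')).set ↑i
            (fun _ => 1)) h := by
  classical
  set E : Fin T → (Fin N × S → ℝ) := fun k => fun g' => W (x k) (m g'.1) g' with hE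
  have hlen : (i : ℕ) < (List.ofFn E).length := by simp [i.isLt]
  set F : (Fin N × S → ℝ) → (Fin N × S → ℝ) := fun w =>
    fwdVec A (A.mulVec μ)
      ((List.ofFn E).take ↑i ++ w :: (List.ofFn E).drop (↑i + 1)) with hF
  have hset : ∀ w : Fin N × S → ℝ, (List.ofFn E).set ↑i w
      = (List.ofFn E).take ↑i ++ w :: (List.ofFn E).drop (↑i + 1) :=
    fun w => List.set_eq_take_cons_drop w hlen
  have hjoint : ∀ g, mJointAt A μ W m x i g
      = ∑ h, F (fun g' => if g' = g then 1 else 0) h := by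
    intro g
    unfold mJointAt
    rw [ofFn_ite_eq_set, hset]
  have hstep : ∀ w, F w = fwdVec A
      (A.mulVec fun h => (fwdVec A (A.mulVec μ) ((List.ofFn E).take ↑i)) h * w h)
      ((List.ofFn E).drop (↑i + 1)) := by
    intro w
    rw [hF]
    simp only [fwdVec_append, fwdVec]
  have hsumF : ∑ g, F (fun g' => if g' = g then 1 else 0) = F (fun _ => 1) := by
    have harg : (∑ g : Fin N × S, fun h =>
          (fwdVec A (A.mulVec μ) ((List.ofFn E).take ↑i)) h * (if h = g then (1:ℝ) else 0))
        = fun h => (fwdVec A (A.mulVec μ) ((List.ofFn E).take ↑i)) h * (1:ℝ) := by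
      funext h
      rw [Finset.sum_apply]
      simp [Finset.sum_ite_eq]
    simp only [hstep]
    rw [← fwdVec_sum, _root_.sum_mulVec, harg]
  calc ∑ g, mJointAt A μ W m x i g
      = ∑ g, ∑ h, F (fun g' => if g' = g then 1 else 0) h := by
        exact Finset.sum_congr rfl fun g _ => hjoint g
    _ = ∑ h, ∑ g, F (fun g' => if g' = g then 1 else 0) h := Finset.sum_comm
    _ = ∑ h, F (fun _ => 1) h := by
        refine Finset.sum_congr rfl fun h _ => ?_
        rw [← hsumF]
        simp [Finset.sum_apply]
    _ = _ := by rw [hset]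

lemma W_le_one {𝕄 S X : Type*} {N : ℕ} [Fintype X]
    (W : X → 𝕄 → Fin N × S → ℝ)
    (hW0 : ∀ z m0 g, 0 ≤ W z m0 g) (hW1 : ∀ m0 g, ∑ z, W z m0 g = 1) :
    ∀ z m0 g, W z m0 g ≤ 1 := by
  intro z m0 g
  rw [← hW1 m0 g]
  exact Finset.single_le_sum (fun z' _ => hW0 z' m0 g) (Finset.mem_univ z)

lemma mJointAt_nonneg {𝕄 S X : Type*} {N T : ℕ} [Fintype S] [DecidableEq S]
    (A : Matrix (Fin N × S) (Fin N × S) ℝ) (μ : Fin N × S → ℝ)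
    (W : X → 𝕄 → Fin N × S → ℝ) (m : Fin N → 𝕄) (x : Fin T → X) (i : Fin T)
    (hA0 : ∀ g g', 0 ≤ A g' g) (hμ0 : ∀ g, 0 ≤ μ g)
    (hW0 : ∀ z m0 g, 0 ≤ W z m0 g) (g : Fin N × S) :
    0 ≤ mJointAt A μ W m x i g := by
  refine Finset.sum_nonneg fun h _ => ?_
  refine fwdVec_nonneg A hA0 _ _ (fun h' => ?_) (fun v hv h' => ?_) h
  · exact Finset.sum_nonneg fun g' _ => mul_nonneg (hA0 g' h') (hμ0 g')
  · rw [List.mem_ofFn] at hv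
    obtain ⟨k, rfl⟩ := hv
    by_cases hk : k = i <;> simp [hk] <;> [positivity; exact hW0 _ _ _]

lemma mSeqPm_le_sum_mJointAt {𝕄 S X : Type*} {N T : ℕ} [Fintype S] [DecidableEq S] [Fintype X]
    (A : Matrix (Fin N × S) (Fin N × S) ℝ) (μ : Fin N × S → ℝ)
    (W : X → 𝕄 → Fin N × S → ℝ) (m : Fin N → 𝕄) (x : Fin T → X) (i : Fin T)
    (hA0 : ∀ g g', 0 ≤ A g' g) (hμ0 : ∀ g, 0 ≤ μ g)
    (hW0 : ∀ z m0 g, 0 ≤ W z m0 g) (hW1 : ∀ m0 g, ∑ z, W z m0 g = 1) :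
    (∑ h, fwdVec A (A.mulVec μ)
        (List.ofFn fun k : Fin T => fun g' => W (x k) (m g'.1) g') h)
      ≤ ∑ g, mJointAt A μ W m x i g := by
  rw [sum_mJointAt]
  refine Finset.sum_le_sum fun h _ => ?_
  refine fwdVec_mono A hA0 ?_ (fun h' => ?_) (fun h' => le_refl _) h
  · rw [List.forall₂_iff_get]
    constructor
    · simp
    · intro n h1 h2
      intro h'
      have hn : n < T := by simpa using h1
      simp only [List.get_eq_getElem, List.getElem_set, List.getElem_ofFn]
      constructor
      · exact hW0 _ _ _
      · split_ifs with hin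
        · exact W_le_one W hW0 hW1 _ _ _
        · exact le_rfl
  · exact Finset.sum_nonneg fun g' _ => mul_nonneg (hA0 g' h') (hμ0 g')

lemma exists_score_functional {𝕄 S X : Type*} {N : ℕ} [Fintype X] [DecidableEq S]
    (W : X → 𝕄 → Fin N × S → ℝ) (jstar : Fin N) (Sstar : Finset S)
    (hli : LinearIndependent ℝ
      (fun p : 𝕄 × {s : S // s ∈ Sstar} => fun z : X => W z p.1 (jstar, p.2.1)))
    (hspan : Submodule.span ℝ
        {f : X → ℝ | ∃ m0 : 𝕄, ∃ s : S, s ∈ Sstar ∧ f = fun z => W z m0 (jstar, s)}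
      ⊓ Submodule.span ℝ
        {f : X → ℝ | ∃ m0 : 𝕄, ∃ g : Fin N × S,
          ¬(g.1 = jstar ∧ g.2 ∈ Sstar) ∧ f = fun z => W z m0 g} = ⊥) :
    ∃ c : X → ℝ, ∀ m0 g,
      ∑ z, c z * W z m0 g = if g.1 = jstar ∧ g.2 ∈ Sstar then 1 else 0 := by
  classical
  set V := Submodule.span ℝ
      {f : X → ℝ | ∃ m0 : 𝕄, ∃ g : Fin N × S,
        ¬(g.1 = jstar ∧ g.2 ∈ Sstar) ∧ f = fun z => W z m0 g} with hV
  set colG : 𝕄 × {s : S // s ∈ Sstar} → (X → ℝ) :=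
      fun p => fun z => W z p.1 (jstar, p.2.1) with hcolG
  have hrange : Set.range colG
      = {f : X → ℝ | ∃ m0 : 𝕄, ∃ s : S, s ∈ Sstar ∧ f = fun z => W z m0 (jstar, s)} := by
    ext f
    constructor
    · rintro ⟨⟨m0, s, hs⟩, rfl⟩
      exact ⟨m0, s, hs, rfl⟩
    · rintro ⟨m0, s, hs, rfl⟩
      exact ⟨(m0, ⟨s, hs⟩), rfl⟩
  have hdisj : Disjoint (Submodule.span ℝ (Set.range colG)) (LinearMap.ker V.mkQ) := by
    rw [Submodule.ker_mkQ, hrange, disjoint_iff]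
    exact hspan
  have hb : LinearIndependent ℝ (V.mkQ ∘ colG) := hli.map hdisj
  set B := Module.Basis.span hb with hB
  obtain ⟨φ, hφ⟩ := LinearMap.exists_extend ((B.constr ℝ) fun _ => (1 : ℝ))
  refine ⟨fun z => φ (V.mkQ fun z' => if z = z' then 1 else 0), ?_⟩
  intro m0 g
  have hrepr : ∑ z, (φ (V.mkQ fun z' => if z = z' then 1 else 0)) * W z m0 g
      = φ (V.mkQ fun z => W z m0 g) := by
    have h2 := LinearMap.pi_apply_eq_sum_univ (φ.comp V.mkQ) (fun z => W z m0 g)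
    rw [show φ (V.mkQ fun z => W z m0 g) = (φ.comp V.mkQ) (fun z => W z m0 g) from rfl, h2]
    simp [mul_comm]
  rw [hrepr]
  split_ifs with hg
  · obtain ⟨hj, hs⟩ := hg
    have hcol : (fun z => W z m0 g) = colG (m0, ⟨g.2, hs⟩) := by
      obtain ⟨j, s⟩ := g
      simp only at hj
      subst hj
      rfl
    rw [hcol]
    have hmk : V.mkQ (colG (m0, ⟨g.2, hs⟩))
        = (Submodule.span ℝ (Set.range (V.mkQ ∘ colG))).subtype (B (m0, ⟨g.2, hs⟩)) := by
      rw [hB]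
      exact (congrArg Subtype.val (Module.Basis.span_apply hb (m0, ⟨g.2, hs⟩))).symm
    rw [hmk, ← LinearMap.comp_apply, hφ, Module.Basis.constr_basis]
  · have hmem : (fun z => W z m0 g) ∈ V := Submodule.subset_span ⟨m0, g, hg, rfl⟩
    have hz : V.mkQ (fun z => W z m0 g) = 0 := (Submodule.Quotient.mk_eq_zero V).mpr hmem
    rw [hz, map_zero]

/-!
STATEMENT 8 (Lemma D.3 of the paper).

Memory-augmented HMM with non-degeneracy for recoverable states
`H* = {j*} × S*` and regularity.  For `x ∈ X^T` let
`Î(x) = { i ∈ [T] : supp(P(J_i | X_{−i} = x_{−i})) = {j*}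
                   and supp(P(S_i | X_{−i} = x_{−i})) ⊆ S* }`.
Then there exist a query `q ∈ ℝ^{|H|}` and a key matrix `Θᴷ ∈ ℝ^{|H|×|X|}`
such that whenever `P(X_{1:T} = x) > 0` and `Î(x)` is nonempty, the set of
attended-to positions `argmax_{i ∈ [T]} { qᵀ Θᴷ G_i(x) }` equals `Î(x)`.
-/
theorem stmt8 {𝕄 S X : Type*} {N : ℕ}
    [Fintype 𝕄] [Fintype S] [Fintype X] [DecidableEq 𝕄] [DecidableEq S]
    (pM : (Fin N → 𝕄) → ℝ) (μ : Fin N × S → ℝ)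
    (A : Matrix (Fin N × S) (Fin N × S) ℝ) (W : X → 𝕄 → Fin N × S → ℝ)
    (hpM0 : ∀ m, 0 ≤ pM m) (hpM1 : ∑ m, pM m = 1)
    (hμ0 : ∀ g, 0 ≤ μ g) (hμ1 : ∑ g, μ g = 1)
    (hA0 : ∀ g g', 0 ≤ A g' g) (hA1 : ∀ g, ∑ g', A g' g = 1)
    (hW0 : ∀ z m0 g, 0 ≤ W z m0 g) (hW1 : ∀ m0 g, ∑ z, W z m0 g = 1)
    -- non-degeneracy with recoverable hidden states `H* = {j*} × S*`
    (jstar : Fin N) (Sstar : Finset S)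
    (hli : LinearIndependent ℝ
      (fun p : 𝕄 × {s : S // s ∈ Sstar} => fun z : X => W z p.1 (jstar, p.2.1)))
    (hspan : Submodule.span ℝ
        {f : X → ℝ | ∃ m0 : 𝕄, ∃ s : S, s ∈ Sstar ∧ f = fun z => W z m0 (jstar, s)}
      ⊓ Submodule.span ℝ
        {f : X → ℝ | ∃ m0 : 𝕄, ∃ g : Fin N × S,
          ¬(g.1 = jstar ∧ g.2 ∈ Sstar) ∧ f = fun z => W z m0 g}
      = ⊥)
    -- regularity
    (hErg : ∃ n₀ : ℕ, ∀ n ≥ n₀, ∀ g g' : Fin N × S, 0 < (A ^ n) g' g)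
    (hfull : ∀ g, 0 < μ g)
    (T : ℕ) :
    ∃ (q : Fin N × S → ℝ) (ΘK : Matrix (Fin N × S) X ℝ),
      ∀ x : Fin T → X,
        0 < mSeqP pM A μ W x →
        -- `Î(x)` is nonempty
        (∃ i : Fin T,
          ((∀ j : Fin N, j ≠ jstar → ∑ s, mPostH pM A μ W x i (j, s) = 0)
            ∧ (∑ s, mPostH pM A μ W x i (jstar, s)) ≠ 0)
          ∧ (∀ s : S, s ∉ Sstar → ∑ j, mPostH pM A μ W x i (j, s) = 0)) →
        -- attended-to positions = `Î(x)`
        {i : Fin T | ∀ i' : Fin T,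
            q ⬝ᵥ ΘK.mulVec (mGtok pM A μ W x i')
              ≤ q ⬝ᵥ ΘK.mulVec (mGtok pM A μ W x i)}
          = {i : Fin T |
              ((∀ j : Fin N, j ≠ jstar → ∑ s, mPostH pM A μ W x i (j, s) = 0)
                ∧ (∑ s, mPostH pM A μ W x i (jstar, s)) ≠ 0)
              ∧ (∀ s : S, s ∉ Sstar → ∑ j, mPostH pM A μ W x i (j, s) = 0)} := by
  classical
  obtain ⟨c, hc⟩ := exists_score_functional W jstar Sstar hli hspan
  refine ⟨(fun _ => (Fintype.card (Fin N × S) : ℝ)⁻¹), Matrix.of (fun _ z => c z), ?_⟩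
  intro x hpos hne
  -- `Fin N × S` is nonempty, else `mSeqP … = 0`
  rcases isEmpty_or_nonempty (Fin N × S) with he | hnemp
  · exfalso
    have h0 : mSeqP pM A μ W x = 0 := by
      unfold mSeqP mSeqPm
      simp
    linarith
  have hcard : (Fintype.card (Fin N × S) : ℝ) ≠ 0 := by
    exact_mod_cast Fintype.card_ne_zero
  -- positivity of the normalizer
  have hZpos : ∀ i : Fin T, 0 < mZ pM A μ W x i := by
    intro i
    have hle : mSeqP pM A μ W x ≤ mZ pM A μ W x i := by
      unfold mSeqP mZ mSeqPm
      refine Finset.sum_le_sum fun m _ => mul_le_mul_of_nonneg_left ?_ (hpM0 m)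
      exact mSeqPm_le_sum_mJointAt A μ W m x i hA0 hμ0 hW0 hW1
    linarith
  have hjnn : ∀ (m : Fin N → 𝕄) (i : Fin T) (g : Fin N × S),
      0 ≤ mJointAt A μ W m x i g :=
    fun m i g => mJointAt_nonneg A μ W m x i hA0 hμ0 hW0 g
  have hpostnn : ∀ (i : Fin T) (g : Fin N × S), 0 ≤ mPostH pM A μ W x i g := by
    intro i g
    unfold mPostH
    exact div_nonneg (Finset.sum_nonneg fun m _ => mul_nonneg (hpM0 m) (hjnn m i g))
      (le_of_lt (hZpos i))
  have hpostsum : ∀ i : Fin T, ∑ g, mPostH pM A μ W x i g = 1 := by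
    intro i
    unfold mPostH
    rw [← Finset.sum_div, Finset.sum_comm]
    have hzz : ∑ m, ∑ g : Fin N × S, pM m * mJointAt A μ W m x i g = mZ pM A μ W x i := by
      unfold mZ
      exact Finset.sum_congr rfl fun m _ => (Finset.mul_sum _ _ _).symm
    rw [hzz, div_self (ne_of_gt (hZpos i))]
  set Fil : Finset (Fin N × S) :=
    Finset.univ.filter (fun g : Fin N × S => g.1 = jstar ∧ g.2 ∈ Sstar) with hFil
  set P : Fin T → ℝ := fun i => ∑ g ∈ Fil, mPostH pM A μ W x i g with hPdef
  -- the attention score equals the posterior mass on the recoverable states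
  have hscore : ∀ i : Fin T,
      (fun _ : Fin N × S => (Fintype.card (Fin N × S) : ℝ)⁻¹) ⬝ᵥ
        (Matrix.of (fun _ z => c z)).mulVec (mGtok pM A μ W x i) = P i := by
    intro i
    have hL : ∀ gg : Fin N × S,
        ((Matrix.of (fun (_ : Fin N × S) z => c z)).mulVec (mGtok pM A μ W x i)) gg
          = ∑ z, c z * mGtok pM A μ W x i z := by
      intro gg
      simp [Matrix.mulVec, dotProduct]
    have hdot : (fun _ : Fin N × S => (Fintype.card (Fin N × S) : ℝ)⁻¹) ⬝ᵥ
        (Matrix.of (fun _ z => c z)).mulVec (mGtok pM A μ W x i)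
        = ∑ z, c z * mGtok pM A μ W x i z := by
      rw [dotProduct]
      rw [Finset.sum_congr rfl fun gg _ => by rw [hL gg]]
      rw [Finset.sum_const, Finset.card_univ, nsmul_eq_mul, ← mul_assoc,
        mul_inv_cancel₀ hcard, one_mul]
    rw [hdot]
    -- numerator computation
    have hnum : ∑ z, c z * (∑ m, pM m * ∑ g, mJointAt A μ W m x i g * W z (m g.1) g)
        = ∑ m, ∑ g : Fin N × S, (pM m * mJointAt A μ W m x i g) *
            (if g.1 = jstar ∧ g.2 ∈ Sstar then (1:ℝ) else 0) := by
      simp only [Finset.mul_sum]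
      rw [Finset.sum_comm]
      refine Finset.sum_congr rfl fun m _ => ?_
      rw [Finset.sum_comm]
      refine Finset.sum_congr rfl fun g _ => ?_
      have hre : ∀ z, c z * (pM m * (mJointAt A μ W m x i g * W z (m g.1) g))
          = (pM m * mJointAt A μ W m x i g) * (c z * W z (m g.1) g) := by
        intro z; ring
      rw [Finset.sum_congr rfl fun z _ => hre z, ← Finset.mul_sum, hc]
    have hfil : ∑ m, ∑ g : Fin N × S, (pM m * mJointAt A μ W m x i g) *
            (if g.1 = jstar ∧ g.2 ∈ Sstar then (1:ℝ) else 0)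
        = ∑ g ∈ Fil, ∑ m, pM m * mJointAt A μ W m x i g := by
      rw [hFil, Finset.sum_filter, Finset.sum_comm]
      refine Finset.sum_congr rfl fun g _ => ?_
      split_ifs with hg <;> simp
    -- put the pieces together
    unfold mGtok
    rw [Finset.sum_congr rfl fun z (_ : z ∈ Finset.univ) =>
      (mul_div_assoc (c z) _ (mZ pM A μ W x i)).symm]
    rw [← Finset.sum_div, hnum, hfil]
    simp only [hPdef]
    unfold mPostH
    rw [Finset.sum_div]
  -- `P i ≤ 1`
  have hP1 : ∀ i : Fin T, P i ≤ 1 := by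
    intro i
    rw [hPdef]
    calc ∑ g ∈ Fil, mPostH pM A μ W x i g
        ≤ ∑ g, mPostH pM A μ W x i g :=
          Finset.sum_le_sum_of_subset_of_nonneg (Finset.filter_subset _ _)
            (fun g _ _ => hpostnn i g)
      _ = 1 := hpostsum i
  -- `P i = 1` iff `i ∈ Î(x)`
  have hiff : ∀ i : Fin T,
      (((∀ j : Fin N, j ≠ jstar → ∑ s, mPostH pM A μ W x i (j, s) = 0)
          ∧ (∑ s, mPostH pM A μ W x i (jstar, s)) ≠ 0)
        ∧ (∀ s : S, s ∉ Sstar → ∑ j, mPostH pM A μ W x i (j, s) = 0)) ↔ P i = 1 := by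
    intro i
    constructor
    · rintro ⟨⟨hj0, _⟩, hs0⟩
      have hterm : ∀ g ∈ Finset.univ, g ∉ Fil → mPostH pM A μ W x i g = 0 := by
        intro g _ hg
        rw [hFil] at hg
        simp only [Finset.mem_filter, Finset.mem_univ, true_and] at hg
        by_cases hj : g.1 = jstar
        · have hs : g.2 ∉ Sstar := fun hs => hg ⟨hj, hs⟩
          have h0 := hs0 g.2 hs
          have := (Finset.sum_eq_zero_iff_of_nonneg
            (fun j _ => hpostnn i (j, g.2))).mp h0 g.1 (Finset.mem_univ _)
          simpa using this
        · have h0 := hj0 g.1 hj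
          have := (Finset.sum_eq_zero_iff_of_nonneg
            (fun s _ => hpostnn i (g.1, s))).mp h0 g.2 (Finset.mem_univ _)
          simpa using this
      have hPeq : P i = ∑ g ∈ Finset.univ, mPostH pM A μ W x i g := by
        simp only [hPdef, hFil]
        exact Finset.sum_subset (Finset.filter_subset _ _) hterm
      rw [hPeq]
      exact hpostsum i
    · intro hPi
      have hcompl : ∑ g ∈ Finset.univ.filter
          (fun g : Fin N × S => ¬(g.1 = jstar ∧ g.2 ∈ Sstar)), mPostH pM A μ W x i g = 0 := by
        have hsplit := Finset.sum_filter_add_sum_filter_not Finset.univ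
          (fun g : Fin N × S => (g.1 = jstar ∧ g.2 ∈ Sstar)) (mPostH pM A μ W x i)
        rw [hpostsum i] at hsplit
        have : P i = ∑ g ∈ Finset.univ.filter
            (fun g : Fin N × S => (g.1 = jstar ∧ g.2 ∈ Sstar)), mPostH pM A μ W x i g := by
          simp only [hPdef, hFil]
        linarith [hsplit, this ▸ hPi]
      have hterm0 : ∀ g : Fin N × S, ¬(g.1 = jstar ∧ g.2 ∈ Sstar) →
          mPostH pM A μ W x i g = 0 := by
        intro g hg
        exact (Finset.sum_eq_zero_iff_of_nonneg
          (fun g' _ => hpostnn i g')).mp hcompl g (by simpa [Finset.mem_filter, not_and] using hg)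
      refine ⟨⟨fun j hj => Finset.sum_eq_zero fun s _ => hterm0 (j, s) (by simp [hj]), ?_⟩,
        fun s hs => Finset.sum_eq_zero fun j _ => hterm0 (j, s) (by simp [hs])⟩
      intro hcontra
      have hall : ∑ g, mPostH pM A μ W x i g = 0 := by
        refine Finset.sum_eq_zero fun g _ => ?_
        by_cases hj : g.1 = jstar
        · have := (Finset.sum_eq_zero_iff_of_nonneg
            (fun s _ => hpostnn i (jstar, s))).mp hcontra g.2 (Finset.mem_univ _)
          rw [← hj] at this
          simpa using this
        · exact hterm0 g (fun hgg => hj hgg.1)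
      rw [hpostsum i] at hall
      linarith
  -- conclude: argmax set = Î(x)
  ext i
  simp only [Set.mem_setOf_eq]
  constructor
  · intro hmax
    obtain ⟨i0, hi0⟩ := hne
    have h1 : P i0 = 1 := (hiff i0).mp hi0
    have hle := hmax i0
    rw [hscore i0, hscore i, h1] at hle
    exact (hiff i).mpr (le_antisymm (hP1 i) hle)
  · intro hcond i'
    rw [hscore i', hscore i, (hiff i).mp hcond]
    exact hP1 i'


end
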